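/- For every α ∈ (0,∞) with α ≠ 1 there exists a constant C > 0 such that |h_α(t)| ≤ C · t^β (1-t)^β for all t ∈ [0,1], where β = min(α, 1). -/

import Mathlib

theorem renyi_entropy_endpoint_bound (α : ℝ) (hα : 0 < α) (hα1 : α ≠ 1) :
    ∃ C : ℝ, 0 < C ∧ ∀ t ∈ Set.Icc (0:ℝ) 1,
      |(1 - α)⁻¹ * Real.log (t ^ α + (1 - t) ^ α)| ≤
        C * t ^ (min α 1) * (1 - t) ^ (min α 1) := by
  rcases lt_or_gt_of_ne hα1 with hlt | hgt
  · -- case 0 < α < 1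
    refine ⟨(1 - α)⁻¹, inv_pos.2 (by linarith), ?_⟩
    rintro t ⟨ht0, ht1⟩
    have hmin : min α 1 = α := min_eq_left hlt.le
    rw [hmin]
    have h1t0 : (0:ℝ) ≤ 1 - t := by linarith
    have ha : t ^ α ≤ 1 := Real.rpow_le_one ht0 ht1 hα.le
    have hb : (1 - t) ^ α ≤ 1 := Real.rpow_le_one h1t0 (by linarith) hα.le
    -- s ≥ 1
    have hsa : t ≤ t ^ α := by
      rcases eq_or_lt_of_le ht0 with h | h
      · rw [← h]; rw [Real.zero_rpow hα.ne']
      · calc t = t ^ (1:ℝ) := (Real.rpow_one t).symm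
          _ ≤ t ^ α := Real.rpow_le_rpow_of_exponent_ge h ht1 hlt.le
    have hsb : 1 - t ≤ (1 - t) ^ α := by
      rcases eq_or_lt_of_le h1t0 with h | h
      · rw [← h]; rw [Real.zero_rpow hα.ne']
      · calc 1 - t = (1 - t) ^ (1:ℝ) := (Real.rpow_one _).symm
          _ ≤ (1 - t) ^ α := Real.rpow_le_rpow_of_exponent_ge h (by linarith) hlt.le
    have hs1 : (1:ℝ) ≤ t ^ α + (1 - t) ^ α := by linarith
    have hlog0 : 0 ≤ Real.log (t ^ α + (1 - t) ^ α) := Real.log_nonneg hs1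
    have hlog : Real.log (t ^ α + (1 - t) ^ α) ≤ t ^ α * (1 - t) ^ α := by
      have h2 := Real.log_le_sub_one_of_pos (by linarith : (0:ℝ) < t ^ α + (1 - t) ^ α)
      nlinarith [mul_nonneg (sub_nonneg.2 ha) (sub_nonneg.2 hb)]
    have hinv : (0:ℝ) < (1 - α)⁻¹ := inv_pos.2 (by linarith)
    rw [abs_of_nonneg (mul_nonneg hinv.le hlog0)]
    calc (1 - α)⁻¹ * Real.log (t ^ α + (1 - t) ^ α)
        ≤ (1 - α)⁻¹ * (t ^ α * (1 - t) ^ α) := by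
          exact mul_le_mul_of_nonneg_left hlog hinv.le
      _ = (1 - α)⁻¹ * t ^ α * (1 - t) ^ α := by ring
  · -- case α > 1
    refine ⟨2 ^ (α + 1) * α / (α - 1), div_pos (by positivity) (by linarith), ?_⟩
    rintro t ⟨ht0, ht1⟩
    have hmin : min α 1 = 1 := min_eq_right hgt.le
    rw [hmin, Real.rpow_one, Real.rpow_one]
    have h1t0 : (0:ℝ) ≤ 1 - t := by linarith
    -- s ≤ 1
    have hsa : t ^ α ≤ t := by
      rcases eq_or_lt_of_le ht0 with h | h
      · rw [← h]; rw [Real.zero_rpow hα.ne']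
      · calc t ^ α ≤ t ^ (1:ℝ) := Real.rpow_le_rpow_of_exponent_ge h ht1 hgt.le
          _ = t := Real.rpow_one t
    have hsb : (1 - t) ^ α ≤ 1 - t := by
      rcases eq_or_lt_of_le h1t0 with h | h
      · rw [← h]; rw [Real.zero_rpow hα.ne']
      · calc (1 - t) ^ α ≤ (1 - t) ^ (1:ℝ) :=
            Real.rpow_le_rpow_of_exponent_ge h (by linarith) hgt.le
          _ = 1 - t := Real.rpow_one _
    have hs_le1 : t ^ α + (1 - t) ^ α ≤ 1 := by linarith
    -- s ≥ 2⁻ᵅ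
    have h2pos : (0:ℝ) < (2:ℝ) ^ α := by positivity
    have h2eq : ((2:ℝ) ^ α)⁻¹ = (1/2 : ℝ) ^ α := by
      rw [← Real.inv_rpow (by norm_num : (0:ℝ) ≤ 2)]
      norm_num
    have hslb : ((2:ℝ) ^ α)⁻¹ ≤ t ^ α + (1 - t) ^ α := by
      have hta : 0 ≤ t ^ α := Real.rpow_nonneg ht0 α
      have htb : 0 ≤ (1 - t) ^ α := Real.rpow_nonneg h1t0 α
      rw [h2eq]
      rcases le_or_gt (1/2 : ℝ) t with h | h
      · have : (1/2 : ℝ) ^ α ≤ t ^ α := Real.rpow_le_rpow (by norm_num) h hα.le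
        linarith
      · have : (1/2 : ℝ) ^ α ≤ (1 - t) ^ α := Real.rpow_le_rpow (by norm_num) (by linarith) hα.le
        linarith
    have hspos : (0:ℝ) < t ^ α + (1 - t) ^ α := lt_of_lt_of_le (by positivity) hslb
    set s := t ^ α + (1 - t) ^ α with hs
    -- Bernoulli bounds: 1 - tᵅ ≤ α(1-t), 1 - (1-t)ᵅ ≤ αt
    have hbern1 : 1 - t ^ α ≤ α * (1 - t) := by
      have := one_add_mul_self_le_rpow_one_add (s := t - 1) (by linarith) hgt.le
      have h' : 1 + α * (t - 1) ≤ t ^ α := by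
        simpa using this
      nlinarith
    have hbern2 : 1 - (1 - t) ^ α ≤ α * t := by
      have := one_add_mul_self_le_rpow_one_add (s := -t) (by linarith) hgt.le
      have h' : 1 + α * (-t) ≤ (1 - t) ^ α := by
        have e : (1 : ℝ) + -t = 1 - t := by ring
        rw [e] at this
        exact this
      nlinarith
    have hta : 0 ≤ t ^ α := Real.rpow_nonneg ht0 α
    have htb : 0 ≤ (1 - t) ^ α := Real.rpow_nonneg h1t0 α
    -- 1 - s ≤ 2αt(1-t)
    have h1s : 1 - s ≤ 2 * α * t * (1 - t) := by
      rcases le_or_gt t (1/2 : ℝ) with h | h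
      · have h1 : 1 - s ≤ α * t := by rw [hs]; nlinarith
        nlinarith
      · have h1 : 1 - s ≤ α * (1 - t) := by rw [hs]; nlinarith
        nlinarith
    -- -log s ≤ 2ᵅ (1 - s)
    have hneglog : -Real.log s ≤ 2 ^ α * (1 - s) := by
      have h1 := Real.log_le_sub_one_of_pos (inv_pos.2 hspos)
      rw [Real.log_inv] at h1
      have h2 : s⁻¹ - 1 = (1 - s) / s := by field_simp
      rw [h2] at h1
      have h1ms : (0:ℝ) ≤ 1 - s := by linarith
      have h3 : (1 - s) / s ≤ 2 ^ α * (1 - s) := by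
        rw [div_le_iff₀ hspos]
        have h4 : ((2:ℝ)^α)⁻¹ * (2 ^ α * (1 - s)) ≤ s * (2 ^ α * (1 - s)) := by
          apply mul_le_mul_of_nonneg_right hslb
          exact mul_nonneg h2pos.le h1ms
        calc 1 - s = ((2:ℝ)^α)⁻¹ * (2 ^ α * (1 - s)) := by field_simp
          _ ≤ s * (2 ^ α * (1 - s)) := h4
          _ = 2 ^ α * (1 - s) * s := by ring
      exact h1.trans h3
    have hlog_nonpos : Real.log s ≤ 0 := Real.log_nonpos hspos.le hs_le1
    have hinvneg : (1 - α)⁻¹ < 0 := inv_lt_zero.2 (by linarith)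
    have habs : |(1 - α)⁻¹ * Real.log s| = (α - 1)⁻¹ * (-Real.log s) := by
      rw [abs_mul, abs_of_neg hinvneg, abs_of_nonpos hlog_nonpos, neg_inv,
        show -(1 - α) = α - 1 by ring]
    rw [habs]
    have hinvpos : (0:ℝ) < (α - 1)⁻¹ := by
      apply inv_pos.2; linarith
    calc (α - 1)⁻¹ * (-Real.log s)
        ≤ (α - 1)⁻¹ * (2 ^ α * (2 * α * t * (1 - t))) := by
          apply mul_le_mul_of_nonneg_left _ hinvpos.le
          calc -Real.log s ≤ 2 ^ α * (1 - s) := hneglog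
            _ ≤ 2 ^ α * (2 * α * t * (1 - t)) := by
                apply mul_le_mul_of_nonneg_left h1s h2pos.le
      _ = 2 ^ (α + 1) * α / (α - 1) * t * (1 - t) := by
          rw [Real.rpow_add (by norm_num : (0:ℝ) < 2), Real.rpow_one]
          field_simp
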